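/- Let k ≥ 1 be an integer and let p ≤ q be integers, and set a := α + 2δp and b := α + 2δq (so a, b ∈ F). Then ∫_a^b |err(x)|^k dx = ((b − a)/(k+1)) · δ^k, and if moreover k is odd then ∫_a^b err(x)^k dx = 0. -/

import Mathlib

open MeasureTheory

-- auxiliary lemmas about the model error function
noncomputable def meshErr (δ α : ℝ) (x : ℝ) : ℝ :=
  2 * δ * round ((x - α) / (2 * δ)) + α - x

lemma meshErr_measurable (δ α : ℝ) : Measurable (meshErr δ α) := by
  have h1 : Measurable fun x : ℝ => ((round ((x - α) / (2 * δ)) : ℤ) : ℝ) := by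
    have : Measurable fun x : ℝ => (⌊(x - α) / (2 * δ) + 1 / 2⌋ : ℤ) :=
      Measurable.floor (by fun_prop)
    simp only [round_eq]
    exact (measurable_from_top (f := fun z : ℤ => (z : ℝ))).comp this
  unfold meshErr
  fun_prop

lemma meshErr_abs_le (δ α : ℝ) (hδ : 0 < δ) (x : ℝ) : |meshErr δ α x| ≤ δ := by
  have h2δ : (0:ℝ) < 2 * δ := by linarith
  have : meshErr δ α x = 2 * δ * ((round ((x - α) / (2 * δ)) : ℝ) - (x - α) / (2 * δ)) := by
    unfold meshErr; field_simp; ring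
  rw [this, abs_mul, abs_of_pos h2δ, abs_sub_comm]
  have := abs_sub_round ((x - α) / (2 * δ))
  nlinarith [abs_nonneg ((x - α) / (2 * δ) - round ((x - α) / (2 * δ)))]

lemma meshErr_min (δ α : ℝ) (hδ : 0 < δ) (x : ℝ) (z : ℤ) :
    |meshErr δ α x| ≤ |(2 * δ * z + α) - x| := by
  have h2δ : (0:ℝ) < 2 * δ := by linarith
  set u := (x - α) / (2 * δ) with hu
  have hx : x = 2 * δ * u + α := by rw [hu]; field_simp; ring
  have h1 : meshErr δ α x = 2 * δ * ((round u : ℝ) - u) := by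
    unfold meshErr; rw [← hu, hx]; ring
  have h2 : (2 * δ * z + α) - x = 2 * δ * ((z : ℝ) - u) := by rw [hx]; ring
  rw [h1, h2, abs_mul (2*δ), abs_mul (2*δ)]
  have := round_le u z
  rw [abs_sub_comm u _, abs_sub_comm u _] at this
  exact mul_le_mul_of_nonneg_left this (abs_nonneg _)

lemma meshErr_periodic (δ α : ℝ) (hδ : 0 < δ) :
    Function.Periodic (meshErr δ α) (2 * δ) := by
  intro x
  have h2δ : (2 * δ) ≠ 0 := by positivity
  unfold meshErr
  have : (x + 2 * δ - α) / (2 * δ) = (x - α) / (2 * δ) + (1 : ℤ) := by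
    push_cast; field_simp; ring
  rw [this, round_add_intCast]
  push_cast
  ring

lemma meshErr_abs_left (δ α : ℝ) (hδ : 0 < δ) (x : ℝ) (hx : x ∈ Set.Icc α (α + δ)) :
    |meshErr δ α x| = x - α := by
  have h2δ : (0:ℝ) < 2 * δ := by linarith
  set u := (x - α) / (2 * δ) with hu
  have hu0 : 0 ≤ u := by apply div_nonneg <;> [linarith [hx.1]; linarith]
  have hu2 : u ≤ 1 / 2 := by
    rw [hu, div_le_div_iff₀ h2δ (by norm_num)]; linarith [hx.2]
  have hx' : 2 * δ * u = x - α := by rw [hu]; field_simp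
  have h1 : meshErr δ α x = 2 * δ * ((round u : ℝ) - u) := by
    unfold meshErr; rw [← hu, mul_sub, hx']; ring
  rw [h1, abs_mul (2*δ), abs_of_pos h2δ, abs_sub_comm, abs_sub_round_eq_min,
    Int.fract_eq_self.mpr ⟨hu0, by linarith⟩, min_eq_left (by linarith), hx']

lemma meshErr_eq_right (δ α : ℝ) (hδ : 0 < δ) (x : ℝ)
    (hx : x ∈ Set.Icc (α + δ) (α + 2 * δ)) :
    meshErr δ α x = α + 2 * δ - x := by
  have h2δ : (0:ℝ) < 2 * δ := by linarith
  set u := (x - α) / (2 * δ) with hu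
  have hu1 : 1/2 ≤ u := by
    rw [hu, le_div_iff₀ h2δ]; linarith [hx.1]
  have hu2 : u ≤ 1 := by
    rw [hu, div_le_one h2δ]; linarith [hx.2]
  have hr : round u = 1 := by
    rw [round_eq]
    apply Int.floor_eq_iff.mpr
    constructor <;> [push_cast; push_cast] <;> linarith
  unfold meshErr
  rw [← hu, hr]
  push_cast; ring

lemma meshErr_abs_right (δ α : ℝ) (hδ : 0 < δ) (x : ℝ)
    (hx : x ∈ Set.Icc (α + δ) (α + 2 * δ)) :
    |meshErr δ α x| = α + 2 * δ - x := by
  rw [meshErr_eq_right δ α hδ x hx]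
  exact abs_of_nonneg (by linarith [hx.2])

lemma meshErr_eq_left (δ α : ℝ) (hδ : 0 < δ) (x : ℝ) (hx : x ∈ Set.Ico α (α + δ)) :
    meshErr δ α x = α - x := by
  have h2δ : (0:ℝ) < 2 * δ := by linarith
  set u := (x - α) / (2 * δ) with hu
  have hu0 : 0 ≤ u := by apply div_nonneg <;> [linarith [hx.1]; linarith]
  have hu2 : u < 1 / 2 := by
    rw [hu, div_lt_div_iff₀ h2δ (by norm_num)]; linarith [hx.2]
  have hr : round u = 0 := by
    rw [round_eq]
    apply Int.floor_eq_iff.mpr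
    constructor <;> push_cast <;> linarith
  unfold meshErr
  rw [← hu, hr]
  push_cast; ring

lemma bounded_intervalIntegrable {f : ℝ → ℝ} (hf : Measurable f) (C : ℝ)
    (hb : ∀ x, |f x| ≤ C) (t₁ t₂ : ℝ) :
    IntervalIntegrable f MeasureSpace.volume t₁ t₂ := by
  rw [intervalIntegrable_iff]
  apply Measure.integrableOn_of_bounded
  · exact (measure_Ioc_lt_top).ne
  · exact hf.aestronglyMeasurable
  · exact Filter.Eventually.of_forall (fun x => by simpa using hb x)

lemma meshErr_abs_pow_int (δ α : ℝ) (hδ : 0 < δ) (k : ℕ) :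
    ∫ x in α..(α + 2 * δ), |meshErr δ α x| ^ k = 2 * δ ^ (k + 1) / (k + 1) := by
  have hii : ∀ t₁ t₂ : ℝ, IntervalIntegrable (fun x => |meshErr δ α x| ^ k)
      MeasureSpace.volume t₁ t₂ := by
    intro t₁ t₂
    apply bounded_intervalIntegrable ((meshErr_measurable δ α).abs.pow_const k) (δ ^ k)
    intro x
    rw [abs_pow, abs_abs]
    exact pow_le_pow_left₀ (abs_nonneg _) (meshErr_abs_le δ α hδ x) k
  rw [← intervalIntegral.integral_add_adjacent_intervals (hii α (α + δ)) (hii (α + δ) (α + 2 * δ))]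
  have h1 : (∫ x in α..(α + δ), |meshErr δ α x| ^ k) = ∫ x in α..(α + δ), (x - α) ^ k := by
    apply intervalIntegral.integral_congr
    intro x hx
    rw [Set.uIcc_of_le (by linarith)] at hx
    simp only [meshErr_abs_left δ α hδ x hx]
  have h2 : (∫ x in (α + δ)..(α + 2 * δ), |meshErr δ α x| ^ k)
      = ∫ x in (α + δ)..(α + 2 * δ), (-(x - (α + 2 * δ))) ^ k := by
    apply intervalIntegral.integral_congr
    intro x hx
    rw [Set.uIcc_of_le (by linarith)] at hx
    simp only [meshErr_abs_right δ α hδ x hx]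
    ring_nf
  have e1 : (∫ x in α..(α + δ), (x - α) ^ k) = δ ^ (k + 1) / (k + 1) := by
    rw [intervalIntegral.integral_comp_sub_right (fun x => x ^ k) α]
    norm_num [integral_pow]
  have e2 : (∫ x in (α + δ)..(α + 2 * δ), (-(x - (α + 2 * δ))) ^ k)
      = δ ^ (k + 1) / (k + 1) := by
    rw [intervalIntegral.integral_comp_sub_right (fun x => (-x) ^ k) (α + 2 * δ)]
    have : (∫ x in (α + δ - (α + 2*δ))..(α + 2*δ - (α + 2*δ)), (-x) ^ k)
        = ∫ x in (-δ)..(0:ℝ), (-x) ^ k := by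
      have hb : α + δ - (α + 2*δ) = -δ := by ring
      have hb2 : α + 2*δ - (α + 2*δ) = (0:ℝ) := by ring
      rw [hb, hb2]
    rw [this, intervalIntegral.integral_comp_neg (fun x => x ^ k)]
    norm_num [integral_pow]
  rw [h1, h2, e1, e2]
  ring

lemma meshErr_pow_int_odd (δ α : ℝ) (hδ : 0 < δ) (k : ℕ) (hk : Odd k) :
    ∫ x in α..(α + 2 * δ), (meshErr δ α x) ^ k = 0 := by
  have hii : ∀ t₁ t₂ : ℝ, IntervalIntegrable (fun x => (meshErr δ α x) ^ k)
      MeasureSpace.volume t₁ t₂ := by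
    intro t₁ t₂
    apply bounded_intervalIntegrable ((meshErr_measurable δ α).pow_const k) (δ ^ k)
    intro x
    rw [abs_pow]
    exact pow_le_pow_left₀ (abs_nonneg _) (meshErr_abs_le δ α hδ x) k
  rw [← intervalIntegral.integral_add_adjacent_intervals (hii α (α + δ)) (hii (α + δ) (α + 2 * δ))]
  have h1 : (∫ x in α..(α + δ), (meshErr δ α x) ^ k)
      = ∫ x in α..(α + δ), (-(x - α)) ^ k := by
    apply intervalIntegral.integral_congr_ae
    have h0 : (MeasureSpace.volume : Measure ℝ) {α + δ} = 0 := measure_singleton _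
    filter_upwards [measure_eq_zero_iff_ae_notMem.mp h0] with x hx hxm
    rw [Set.uIoc_of_le (by linarith), Set.mem_Ioc] at hxm
    have hlt : x < α + δ := lt_of_le_of_ne hxm.2 (by simpa using hx)
    rw [meshErr_eq_left δ α hδ x ⟨le_of_lt hxm.1, hlt⟩]
    ring_nf
  have h2 : (∫ x in (α + δ)..(α + 2 * δ), (meshErr δ α x) ^ k)
      = ∫ x in (α + δ)..(α + 2 * δ), (-(x - (α + 2 * δ))) ^ k := by
    apply intervalIntegral.integral_congr
    intro x hx
    rw [Set.uIcc_of_le (by linarith)] at hx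
    simp only [meshErr_eq_right δ α hδ x hx]
    ring_nf
  have e2 : (∫ x in (α + δ)..(α + 2 * δ), (-(x - (α + 2 * δ))) ^ k)
      = δ ^ (k + 1) / (k + 1) := by
    rw [intervalIntegral.integral_comp_sub_right (fun x => (-x) ^ k) (α + 2 * δ)]
    have hb : α + δ - (α + 2*δ) = -δ := by ring
    have hb2 : α + 2*δ - (α + 2*δ) = (0:ℝ) := by ring
    rw [hb, hb2, intervalIntegral.integral_comp_neg (fun x => x ^ k)]
    norm_num [integral_pow]
  have e1 : (∫ x in α..(α + δ), (-(x - α)) ^ k) = -(δ ^ (k + 1) / (k + 1)) := by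
    simp only [hk.neg_pow]
    rw [intervalIntegral.integral_neg, intervalIntegral.integral_comp_sub_right
      (fun x => x ^ k) α]
    norm_num [integral_pow]
  rw [h1, h2, e1, e2]
  ring

theorem error_int_uniform_mesh
    (δ α : ℝ) (hδ : 0 < δ)
    (rd : ℝ → ℝ) (hrd_meas : Measurable rd)
    (hrd_mem : ∀ x : ℝ, ∃ z : ℤ, rd x = 2 * δ * z + α)
    (hrd_near : ∀ x : ℝ, ∀ z : ℤ, |rd x - x| ≤ |(2 * δ * z + α) - x|)
    (k : ℕ) (hk : 1 ≤ k)
    (p q : ℤ) (hpq : p ≤ q) (a b : ℝ)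
    (ha : a = α + 2 * δ * p) (hb : b = α + 2 * δ * q) :
    (∫ x in a..b, |rd x - x| ^ k) = ((b - a) / (k + 1)) * δ ^ k ∧
      (Odd k → (∫ x in a..b, (rd x - x) ^ k) = 0) := by
  have hA : ∀ x : ℝ, |rd x - x| = |meshErr δ α x| := by
    intro x
    refine le_antisymm ?_ ?_
    · simpa [meshErr] using hrd_near x (round ((x - α) / (2 * δ)))
    · obtain ⟨z0, hz0⟩ := hrd_mem x
      calc |meshErr δ α x| ≤ |(2 * δ * z0 + α) - x| := meshErr_min δ α hδ x z0
        _ = |rd x - x| := by rw [hz0]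
  have hiiabs : ∀ t₁ t₂ : ℝ, IntervalIntegrable (fun x => |meshErr δ α x| ^ k)
      MeasureSpace.volume t₁ t₂ := by
    intro t₁ t₂
    apply bounded_intervalIntegrable ((meshErr_measurable δ α).abs.pow_const k) (δ ^ k)
    intro x
    rw [abs_pow, abs_abs]
    exact pow_le_pow_left₀ (abs_nonneg _) (meshErr_abs_le δ α hδ x) k
  have hii : ∀ t₁ t₂ : ℝ, IntervalIntegrable (fun x => (meshErr δ α x) ^ k)
      MeasureSpace.volume t₁ t₂ := by
    intro t₁ t₂
    apply bounded_intervalIntegrable ((meshErr_measurable δ α).pow_const k) (δ ^ k)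
    intro x
    rw [abs_pow]
    exact pow_le_pow_left₀ (abs_nonneg _) (meshErr_abs_le δ α hδ x) k
  have hperabs : Function.Periodic (fun x => |meshErr δ α x| ^ k) (2 * δ) := by
    intro x; simp only [meshErr_periodic δ α hδ x]
  have hper : Function.Periodic (fun x => (meshErr δ α x) ^ k) (2 * δ) := by
    intro x; simp only [meshErr_periodic δ α hδ x]
  have hb' : b = a + (q - p) • (2 * δ) := by
    rw [ha, hb, zsmul_eq_mul]; push_cast; ring
  have hk1 : ((k : ℝ) + 1) ≠ 0 := by positivity
  constructor
  · have habs : (∫ x in a..b, |rd x - x| ^ k) = ∫ x in a..b, |meshErr δ α x| ^ k := by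
      apply intervalIntegral.integral_congr
      intro x _
      simp only [hA x]
    rw [habs, hb', Function.Periodic.intervalIntegral_add_zsmul_eq hperabs (q - p) a hiiabs,
      Function.Periodic.intervalIntegral_add_eq hperabs a α,
      meshErr_abs_pow_int δ α hδ k, zsmul_eq_mul, zsmul_eq_mul]
    push_cast
    field_simp
    ring
  · intro hkodd
    have hS : (MeasureSpace.volume : Measure ℝ) (Set.range (fun n : ℤ => α + δ * n)) = 0 :=
      (Set.countable_range _).measure_zero _
    have hae : ∀ᵐ x : ℝ, (rd x - x) ^ k = (meshErr δ α x) ^ k := by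
      filter_upwards [measure_eq_zero_iff_ae_notMem.mp hS] with x hx
      by_cases h : rd x - x = meshErr δ α x
      · rw [h]
      · exfalso
        apply hx
        rcases abs_eq_abs.mp (hA x) with h2 | h2
        · exact absurd h2 h
        · obtain ⟨z0, hz0⟩ := hrd_mem x
          refine ⟨z0 + round ((x - α) / (2 * δ)), ?_⟩
          have hm : meshErr δ α x = 2 * δ * round ((x - α) / (2 * δ)) + α - x := rfl
          rw [hz0, hm] at h2
          push_cast at h2 ⊢
          linarith
    have hsgn : (∫ x in a..b, (rd x - x) ^ k) = ∫ x in a..b, (meshErr δ α x) ^ k :=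
      intervalIntegral.integral_congr_ae (by filter_upwards [hae] with x hx _; exact hx)
    rw [hsgn, hb', Function.Periodic.intervalIntegral_add_zsmul_eq hper (q - p) a hii,
      Function.Periodic.intervalIntegral_add_eq hper a α,
      meshErr_pow_int_odd δ α hδ k hkodd, smul_zero]
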